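/- The map ι_r : S² → M_N defined via ι(a, e^{ib}) = (e^{ib}ξ(a), e^{−ib}ξ(a), −r e^{if(a)}) (extended over the poles) is injective on S² minus the two poles {a = ±π}, and the two poles are mapped to the same point (0, 0, r); hence ι_r has exactly one double point, and it is a transverse self-intersection. -/

import Mathlib

open Finset

/-- Square root with branch cut along the positive real axis and `√(-1) = i`. -/
noncomputable def sqrtB (z : ℂ) : ℂ :=
  if z = 0 then 0 else Complex.exp (Complex.log (-z) / 2) * Complex.I

lemma sqrtB_ne_zero {z : ℂ} (hz : z ≠ 0) : sqrtB z ≠ 0 := by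
  rw [sqrtB, if_neg hz]
  exact mul_ne_zero (Complex.exp_ne_zero _) Complex.I_ne_zero

lemma arg_exp_I_mul {θ : ℝ} (h : θ ∈ Set.Ioc (-Real.pi) Real.pi) :
    (Complex.exp (Complex.I * θ)).arg = θ := by
  rw [mul_comm, Complex.arg_exp_mul_I, toIocMod_eq_self]
  refine ⟨h.1, ?_⟩
  have := h.2
  linarith [Real.pi_pos]

lemma exp_I_mul_inj {x y : ℝ} (hx : x ∈ Set.Ioc (-Real.pi) Real.pi)
    (hy : y ∈ Set.Ioc (-Real.pi) Real.pi)
    (h : Complex.exp (Complex.I * x) = Complex.exp (Complex.I * y)) : x = y := by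
  rw [← arg_exp_I_mul hx, ← arg_exp_I_mul hy, h]

/-- The immersion `ι_r(a, e^{ib}) = (e^{ib}ξ(a), e^{-ib}ξ(a), -r e^{if(a)})` of the
sphere into `M_N` is injective (mod `b ↦ b + 2π`) away from the poles `a = ±π`; both
poles map to the point `(0, 0, r)`, so `ι_r` has exactly one double point; and the two
branch tangent planes there (spanned by `(ξ₊,ξ₊,0),(iξ₊,-iξ₊,0)` and
`(ξ₋,ξ₋,0),(iξ₋,-iξ₋,0)` with `ξ± = √(±ri)·∏_{k≠r}√(r-k)`) intersect trivially: the
self-intersection is transverse. -/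
theorem immersion_one_transverse_double_point (N r : ℕ) (hr : r ∈ Finset.Icc 1 N)
    (f : ℝ → ℝ) (hmono : StrictMonoOn f (Set.Icc (-Real.pi) Real.pi))
    (hfneg : f (-Real.pi) = -Real.pi) (hfpos : f Real.pi = Real.pi)
    (hfmem : ∀ a ∈ Set.Ioo (-Real.pi) Real.pi, f a ∈ Set.Ioo (-Real.pi) Real.pi) :
    let ξ : ℝ → ℂ := fun a =>
      ∏ j ∈ Finset.Icc 1 N, sqrtB (-(r : ℂ) * Complex.exp (Complex.I * (f a)) - (j : ℂ))
    let ι : ℝ → ℝ → ℂ × ℂ × ℂ := fun a b =>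
      (Complex.exp (Complex.I * b) * ξ a, Complex.exp (-(Complex.I) * b) * ξ a,
        -(r : ℂ) * Complex.exp (Complex.I * (f a)))
    (∀ a₁ ∈ Set.Ioo (-Real.pi) Real.pi, ∀ a₂ ∈ Set.Ioo (-Real.pi) Real.pi, ∀ b₁ b₂ : ℝ,
        ι a₁ b₁ = ι a₂ b₂ →
          a₁ = a₂ ∧ Complex.exp (Complex.I * b₁) = Complex.exp (Complex.I * b₂)) ∧
    (∀ b₁ b₂ : ℝ, ι Real.pi b₁ = ((0 : ℂ), (0 : ℂ), (r : ℂ)) ∧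
        ι (-Real.pi) b₂ = ((0 : ℂ), (0 : ℂ), (r : ℂ))) ∧
    (let c : ℂ := ∏ k ∈ (Finset.Icc 1 N).erase r, sqrtB ((r : ℂ) - (k : ℂ))
     let ξp : ℂ := sqrtB ((r : ℂ) * Complex.I) * c
     let ξm : ℂ := sqrtB (-((r : ℂ) * Complex.I)) * c
     Submodule.span ℝ ({(ξp, ξp, 0), (Complex.I * ξp, -(Complex.I) * ξp, 0)} :
          Set (ℂ × ℂ × ℂ)) ⊓
        Submodule.span ℝ ({(ξm, ξm, 0), (Complex.I * ξm, -(Complex.I) * ξm, 0)} :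
          Set (ℂ × ℂ × ℂ)) = ⊥) := by
  intro ξ ι
  have hr1 : 1 ≤ r := (Finset.mem_Icc.mp hr).1
  have hrR : (0 : ℝ) < (r : ℝ) := by exact_mod_cast hr1
  have hrC : (r : ℂ) ≠ 0 := Nat.cast_ne_zero.mpr (by omega)
  -- ξ is nonzero away from the poles
  have hxi_ne : ∀ a ∈ Set.Ioo (-Real.pi) Real.pi, ξ a ≠ 0 := by
    intro a ha
    have hfa := hfmem a ha
    refine Finset.prod_ne_zero_iff.mpr fun j hj => sqrtB_ne_zero ?_
    intro hz
    have hz' : (r : ℂ) * Complex.exp (Complex.I * (f a)) = -(j : ℂ) := by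
      have := sub_eq_zero.mp hz
      linear_combination -this
    have habs : (r : ℝ) = (j : ℝ) := by
      have := congrArg (‖·‖) hz'
      simpa [Complex.norm_exp_ofReal_mul_I, mul_comm Complex.I ((f a : ℝ) : ℂ)] using this
    have hrj : (j : ℂ) = (r : ℂ) := by exact_mod_cast habs.symm
    rw [hrj] at hz'
    have hexp : Complex.exp (Complex.I * (f a)) = -1 :=
      mul_left_cancel₀ hrC (hz'.trans (by ring))
    have harg : f a = Real.pi := by
      have := arg_exp_I_mul (θ := f a) ⟨hfa.1, hfa.2.le⟩
      rw [hexp, Complex.arg_neg_one] at this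
      linarith [this]
    linarith [hfa.2, harg.symm.le]
  refine ⟨?_, ?_, ?_⟩
  · -- injectivity away from the poles
    intro a₁ ha₁ a₂ ha₂ b₁ b₂ h
    have h1 := congrArg Prod.fst h
    have h3 := congrArg (fun p => p.2.2) h
    simp only [ι] at h1 h3
    have hexp3 : Complex.exp (Complex.I * (f a₁)) = Complex.exp (Complex.I * (f a₂)) := by
      have := mul_left_cancel₀ (neg_ne_zero.mpr hrC) h3
      exact this
    have hf12 : f a₁ = f a₂ := by
      have hfa₁ := hfmem a₁ ha₁
      have hfa₂ := hfmem a₂ ha₂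
      exact exp_I_mul_inj ⟨hfa₁.1, hfa₁.2.le⟩ ⟨hfa₂.1, hfa₂.2.le⟩ hexp3
    have ha12 : a₁ = a₂ := by
      refine hmono.injOn ?_ ?_ hf12
      · exact ⟨ha₁.1.le, ha₁.2.le⟩
      · exact ⟨ha₂.1.le, ha₂.2.le⟩
    refine ⟨ha12, ?_⟩
    rw [ha12] at h1
    exact mul_right_cancel₀ (hxi_ne a₂ ha₂) h1
  · -- both poles map to (0,0,r)
    have hexp_pi : Complex.exp (Complex.I * ((f Real.pi : ℝ) : ℂ)) = -1 := by
      rw [hfpos, mul_comm]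
      exact Complex.exp_pi_mul_I
    have hexp_negpi : Complex.exp (Complex.I * ((f (-Real.pi) : ℝ) : ℂ)) = -1 := by
      rw [hfneg]
      push_cast
      rw [show Complex.I * -(Real.pi : ℂ) = -((Real.pi : ℂ) * Complex.I) by ring,
        Complex.exp_neg, Complex.exp_pi_mul_I]
      norm_num
    have hxi_pi : ξ Real.pi = 0 := by
      refine Finset.prod_eq_zero hr ?_
      rw [hexp_pi]
      have : -(r : ℂ) * (-1) - (r : ℂ) = 0 := by ring
      rw [this, sqrtB, if_pos rfl]
    have hxi_negpi : ξ (-Real.pi) = 0 := by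
      refine Finset.prod_eq_zero hr ?_
      rw [hexp_negpi]
      have : -(r : ℂ) * (-1) - (r : ℂ) = 0 := by ring
      rw [this, sqrtB, if_pos rfl]
    intro b₁ b₂
    constructor
    · show (_, _, _) = ((0 : ℂ), (0 : ℂ), (r : ℂ))
      rw [hxi_pi, hexp_pi]
      simp
    · show (_, _, _) = ((0 : ℂ), (0 : ℂ), (r : ℂ))
      rw [hxi_negpi, hexp_negpi]
      simp
  · -- transversality
    intro c ξp ξm
    have hc : c ≠ 0 := by
      refine Finset.prod_ne_zero_iff.mpr fun k hk => sqrtB_ne_zero ?_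
      have hkr : k ≠ r := (Finset.mem_erase.mp hk).1
      intro h
      exact hkr (by exact_mod_cast (sub_eq_zero.mp h).symm)
    have hrI : (r : ℂ) * Complex.I ≠ 0 := mul_ne_zero hrC Complex.I_ne_zero
    have hξp : ξp ≠ 0 := mul_ne_zero (sqrtB_ne_zero hrI) hc
    -- compute the two logs
    have hargI : Complex.arg ((r : ℂ) * Complex.I) = Real.pi / 2 := by
      rw [show (r : ℂ) * Complex.I = ((r : ℝ) : ℂ) * Complex.I by norm_num,
        Complex.arg_real_mul _ hrR, Complex.arg_I]
    have hargnI : Complex.arg (-((r : ℂ) * Complex.I)) = -(Real.pi / 2) := by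
      rw [show -((r : ℂ) * Complex.I) = ((r : ℝ) : ℂ) * (-Complex.I) by push_cast; ring,
        Complex.arg_real_mul _ hrR, Complex.arg_neg_I]
    have habsI : ‖(r : ℂ) * Complex.I‖ = (r : ℝ) := by
      simp
    have habsnI : ‖-((r : ℂ) * Complex.I)‖ = (r : ℝ) := by
      simp
    have hlog1 : Complex.log ((r : ℂ) * Complex.I)
        = (Real.log r : ℂ) + (Real.pi / 2 : ℝ) * Complex.I := by
      rw [Complex.log, hargI, habsI]; try norm_num
    have hlog2 : Complex.log (-((r : ℂ) * Complex.I))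
        = (Real.log r : ℂ) - (Real.pi / 2 : ℝ) * Complex.I := by
      rw [Complex.log, hargnI, habsnI]; push_cast; try ring
    have hξm : ξm = Complex.I * ξp := by
      show sqrtB (-((r : ℂ) * Complex.I)) * c = Complex.I * (sqrtB ((r : ℂ) * Complex.I) * c)
      rw [sqrtB, sqrtB, if_neg (neg_ne_zero.mpr hrI), if_neg hrI, neg_neg]
      rw [hlog1, hlog2]
      have hsplit : ((Real.log r : ℂ) + (Real.pi / 2 : ℝ) * Complex.I) / 2
          = ((Real.log r : ℂ) - (Real.pi / 2 : ℝ) * Complex.I) / 2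
            + (Real.pi / 2 : ℝ) * Complex.I := by push_cast; ring
      rw [hsplit, Complex.exp_add]
      have : Complex.exp (((Real.pi / 2 : ℝ) : ℂ) * Complex.I) = Complex.I := by
        rw [Complex.exp_mul_I]
        push_cast
        rw [Complex.cos_pi_div_two, Complex.sin_pi_div_two]
        ring
      rw [this]
      ring
    -- now the linear algebra
    rw [eq_bot_iff]
    intro x hx
    rw [Submodule.mem_inf] at hx
    obtain ⟨hx1, hx2⟩ := hx
    rw [Submodule.mem_span_pair] at hx1 hx2
    obtain ⟨s, t, hst⟩ := hx1
    obtain ⟨u, v, huv⟩ := hx2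
    have heq := hst.trans huv.symm
    have h1 := congrArg Prod.fst heq
    have h2 := congrArg (fun p => p.2.1) heq
    simp only [Prod.smul_fst, Prod.smul_snd, Prod.fst_add, Prod.snd_add, Prod.smul_mk,
      Prod.mk_add_mk] at h1 h2
    rw [hξm] at h1 h2
    have hsm : ∀ (a : ℝ) (z : ℂ), a • z = (a : ℂ) * z := fun a z => by
      rw [Complex.real_smul]
    rw [hsm, hsm, hsm, hsm] at h1 h2
    have h1' : ((s : ℂ) + t * Complex.I) = (-(v : ℂ) + u * Complex.I) := by
      have hkey : ((s : ℂ) + t * Complex.I) * ξp = (-(v : ℂ) + u * Complex.I) * ξp := by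
        have expand : ((u : ℂ)) * (Complex.I * ξp) + (v : ℂ) * (Complex.I * (Complex.I * ξp))
            = (-(v : ℂ) + u * Complex.I) * ξp := by
          rw [show Complex.I * (Complex.I * ξp) = -ξp by
            rw [← mul_assoc, Complex.I_mul_I]; ring]
          ring
        calc ((s : ℂ) + t * Complex.I) * ξp
            = (s : ℂ) * ξp + (t : ℂ) * (Complex.I * ξp) := by ring
          _ = (u : ℂ) * (Complex.I * ξp) + (v : ℂ) * (Complex.I * (Complex.I * ξp)) := h1
          _ = (-(v : ℂ) + u * Complex.I) * ξp := expand
      exact mul_right_cancel₀ hξp hkey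
    have h2' : ((s : ℂ) - t * Complex.I) = ((v : ℂ) + u * Complex.I) := by
      have hkey : ((s : ℂ) - t * Complex.I) * ξp = ((v : ℂ) + u * Complex.I) * ξp := by
        have expand : ((u : ℂ)) * (Complex.I * ξp) + (v : ℂ) * (-Complex.I * (Complex.I * ξp))
            = ((v : ℂ) + u * Complex.I) * ξp := by
          rw [show -Complex.I * (Complex.I * ξp) = ξp by
            rw [← mul_assoc, neg_mul, Complex.I_mul_I]; ring]
          ring
        calc ((s : ℂ) - t * Complex.I) * ξp
            = (s : ℂ) * ξp + (t : ℂ) * (-Complex.I * ξp) := by ring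
          _ = (u : ℂ) * (Complex.I * ξp) + (v : ℂ) * (-Complex.I * (Complex.I * ξp)) := h2
          _ = ((v : ℂ) + u * Complex.I) * ξp := expand
      exact mul_right_cancel₀ hξp hkey
    have hs : s = -v ∧ t = u := by
      have hre := congrArg Complex.re h1'
      have him := congrArg Complex.im h1'
      simp at hre him
      exact ⟨hre, him⟩
    have hs2 : s = v ∧ -t = u := by
      have hre := congrArg Complex.re h2'
      have him := congrArg Complex.im h2'
      simp at hre him
      exact ⟨hre, him⟩
    have hss : s = 0 := by linarith [hs.1, hs2.1]
    have htt : t = 0 := by linarith [hs.2, hs2.2]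
    rw [Submodule.mem_bot, ← hst, hss, htt]
    simp
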